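/- Let T be a partial isometry (a contraction with T T* T = T) on a complex Hilbert space H, and let T₁, T₂ be contractions on H. Suppose there exist bounded operators F₁, F₂ on the defect space 𝒟_T = ker T such that T₁ − T₂*T = D_T F₁ D_T and T₂ − T₁*T = D_T F₂ D_T. Let D₁, D₂ denote the restrictions of T₁, T₂ to the invariant subspace ker T, viewed as bounded operators on the Hilbert space ker T. Then F₁*F₁ − F₁F₁* = F₂*F₂ − F₂F₂* if and only if D₁*D₁ − D₁D₁* = D₂*D₂ − D₂D₂*. -/

import Mathlib

/- Common definitions: the tetrablock, tetrablock contractions, defect operators and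
defect spaces, fundamental operators, tetrablock isometries and tetrablock-isometric lifts. -/

noncomputable section

open ContinuousLinearMap

universe u

/-- The tetrablock domain `𝔼 ⊆ ℂ³`: points `(x₁,x₂,x₃)` of the form
`(a₁₁, a₂₂, det A)` for some `2×2` complex matrix `A` of operator norm `< 1`. -/
def tetrablock : Set (Fin 3 → ℂ) :=
  {x | ∃ A : Matrix (Fin 2) (Fin 2) ℂ,
    ‖Matrix.toEuclideanCLM (𝕜 := ℂ) A‖ < 1 ∧ x 0 = A 0 0 ∧ x 1 = A 1 1 ∧ x 2 = A.det}

variable {H : Type u} [NormedAddCommGroup H] [InnerProductSpace ℂ H] [CompleteSpace H]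

/-- Evaluation `p(T₁,T₂,T)` of a three-variable polynomial at a (commuting) operator
triple: substitute `T₁,T₂,T` monomial-wise (order is immaterial for commuting triples). -/
def polyEval (T₁ T₂ T : H →L[ℂ] H) (p : MvPolynomial (Fin 3) ℂ) : H →L[ℂ] H :=
  p.support.sum fun m => p.coeff m • (T₁ ^ m 0 * T₂ ^ m 1 * T ^ m 2)

/-- A tetrablock contraction: a commuting triple for which the closed tetrablock is a
spectral set. -/
def IsTetrablockContraction (T₁ T₂ T : H →L[ℂ] H) : Prop :=
  Commute T₁ T₂ ∧ Commute T₁ T ∧ Commute T₂ T ∧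
  ∀ p : MvPolynomial (Fin 3) ℂ,
    ‖polyEval T₁ T₂ T p‖ ≤
      sSup {y : ℝ | ∃ x ∈ closure tetrablock, y = ‖MvPolynomial.eval x p‖}

/-- The defect operator `D_T = (I - T*T)^{1/2}` of a contraction `T`. -/
def defect (T : H →L[ℂ] H) : H →L[ℂ] H := CFC.sqrt (1 - adjoint T * T)

/-- The defect space `𝒟_T`, the closure of the range of `D_T`. -/
def defectSpace (T : H →L[ℂ] H) : Submodule ℂ H :=
  (LinearMap.range (defect T : H →ₗ[ℂ] H)).topologicalClosure

lemma defect_mem (T : H →L[ℂ] H) (h : H) : defect T h ∈ defectSpace T :=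
  Submodule.le_topologicalClosure _ ⟨h, rfl⟩

/-- The defect operator `D_T`, viewed as a map from `H` into the defect space `𝒟_T`. -/
def defectTo (T : H →L[ℂ] H) : H →L[ℂ] defectSpace T :=
  (defect T).codRestrict _ (defect_mem T)

instance (T : H →L[ℂ] H) : CompleteSpace (defectSpace T) :=
  (Submodule.isClosed_topologicalClosure _).completeSpace_coe

/-- `F₁, F₂` are fundamental operators for `(T₁,T₂,T)`:
`T₁ - T₂* T = D_T F₁ D_T` and `T₂ - T₁* T = D_T F₂ D_T`. -/
def AreFundamentalOps (T₁ T₂ T : H →L[ℂ] H)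
    (F₁ F₂ : defectSpace T →L[ℂ] defectSpace T) : Prop :=
  T₁ - adjoint T₂ * T = (defectSpace T).subtypeL ∘L F₁ ∘L defectTo T ∧
  T₂ - adjoint T₁ * T = (defectSpace T).subtypeL ∘L F₂ ∘L defectTo T

/-- A tetrablock isometry: a commuting triple `(V₁,V₂,V)` with `V` an isometry,
`‖V₂‖ ≤ 1` and `V₁ = V₂* V`. -/
def IsTetrablockIsometry {K : Type u} [NormedAddCommGroup K] [InnerProductSpace ℂ K]
    [CompleteSpace K] (V₁ V₂ V : K →L[ℂ] K) : Prop :=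
  Commute V₁ V₂ ∧ Commute V₁ V ∧ Commute V₂ V ∧
    adjoint V * V = 1 ∧ ‖V₂‖ ≤ 1 ∧ V₁ = adjoint V₂ * V

/-- `(T₁,T₂,T)` has a tetrablock-isometric lift: a tetrablock isometry `(V₁,V₂,V)` on a
space `K ⊇ H` whose adjoints extend the adjoints of `T₁,T₂,T`. -/
def HasTetrablockIsometricLift (T₁ T₂ T : H →L[ℂ] H) : Prop :=
  ∃ (K : Type u) (_ : NormedAddCommGroup K) (_ : InnerProductSpace ℂ K) (_ : CompleteSpace K)
    (ι : H →ₗᵢ[ℂ] K) (V₁ V₂ V : K →L[ℂ] K),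
      IsTetrablockIsometry V₁ V₂ V ∧
      (∀ h : H, adjoint V₁ (ι h) = ι (adjoint T₁ h)) ∧
      (∀ h : H, adjoint V₂ (ι h) = ι (adjoint T₂ h)) ∧
      (∀ h : H, adjoint V (ι h) = ι (adjoint T h))

lemma conj_selfComm {E K : Type u} [NormedAddCommGroup E] [InnerProductSpace ℂ E]
    [CompleteSpace E] [NormedAddCommGroup K] [InnerProductSpace ℂ K] [CompleteSpace K]
    (e : E ≃ₗᵢ[ℂ] K) (F : E →L[ℂ] E) (D : K →L[ℂ] K)
    (h : D = (e : E →L[ℂ] K) ∘L F ∘L (e.symm : K →L[ℂ] E)) :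
    adjoint D * D - D * adjoint D =
      (e : E →L[ℂ] K) ∘L (adjoint F * F - F * adjoint F) ∘L (e.symm : K →L[ℂ] E) := by
  subst h
  have hadj : adjoint ((e : E →L[ℂ] K) ∘L F ∘L (e.symm : K →L[ℂ] E)) =
      (e : E →L[ℂ] K) ∘L adjoint F ∘L (e.symm : K →L[ℂ] E) := by
    rw [adjoint_comp, adjoint_comp, LinearIsometryEquiv.adjoint_eq_symm,
      LinearIsometryEquiv.adjoint_eq_symm, LinearIsometryEquiv.symm_symm]
    rfl
  rw [hadj]
  ext x
  simp [mul_apply, map_sub]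

lemma conj_inj {E K : Type u} [NormedAddCommGroup E] [InnerProductSpace ℂ E]
    [CompleteSpace E] [NormedAddCommGroup K] [InnerProductSpace ℂ K] [CompleteSpace K]
    (e : E ≃ₗᵢ[ℂ] K) (A B : E →L[ℂ] E)
    (h : (e : E →L[ℂ] K) ∘L A ∘L (e.symm : K →L[ℂ] E) =
         (e : E →L[ℂ] K) ∘L B ∘L (e.symm : K →L[ℂ] E)) : A = B := by
  ext x
  have := congrFun (congrArg DFunLike.coe h) (e x)
  simpa using e.injective (by simpa using this)

set_option maxHeartbeats 1000000

/-- under the hypotheses of Statement 13, with `D₁, D₂` the restrictions of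
`T₁, T₂` to the invariant subspace `ker T`, we have
`F₁*F₁ - F₁F₁* = F₂*F₂ - F₂F₂*` if and only if `D₁*D₁ - D₁D₁* = D₂*D₂ - D₂D₂*`. -/
theorem selfCommutator_iff_restriction_selfCommutator
    (T T₁ T₂ : H →L[ℂ] H) (hT : ‖T‖ ≤ 1) (hpi : T * adjoint T * T = T)
    (h1 : ‖T₁‖ ≤ 1) (h2 : ‖T₂‖ ≤ 1)
    (F₁ F₂ : defectSpace T →L[ℂ] defectSpace T)
    (hF₁ : T₁ - adjoint T₂ * T = (defectSpace T).subtypeL ∘L F₁ ∘L defectTo T)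
    (hF₂ : T₂ - adjoint T₁ * T = (defectSpace T).subtypeL ∘L F₂ ∘L defectTo T)
    (D₁ D₂ : LinearMap.ker (T : H →ₗ[ℂ] H) →L[ℂ] LinearMap.ker (T : H →ₗ[ℂ] H))
    (hD₁ : ∀ x : LinearMap.ker (T : H →ₗ[ℂ] H), (D₁ x : H) = T₁ (x : H))
    (hD₂ : ∀ x : LinearMap.ker (T : H →ₗ[ℂ] H), (D₂ x : H) = T₂ (x : H)) :
    adjoint F₁ * F₁ - F₁ * adjoint F₁ = adjoint F₂ * F₂ - F₂ * adjoint F₂ ↔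
      adjoint D₁ * D₁ - D₁ * adjoint D₁ = adjoint D₂ * D₂ - D₂ * adjoint D₂ := by
  set Q : H →L[ℂ] H := adjoint T * T with hQdef
  have hQ : Q * Q = Q := by
    rw [hQdef, mul_assoc, ← mul_assoc T (adjoint T) T, hpi]
  have hsa : IsSelfAdjoint ((1 : H →L[ℂ] H) - Q) := by
    simp [IsSelfAdjoint, hQdef, star_sub, star_mul, star_eq_adjoint, adjoint_adjoint]
  have hPidem : ((1 : H →L[ℂ] H) - Q) * (1 - Q) = 1 - Q := by
    rw [sub_mul, mul_sub, mul_sub, hQ, mul_one, one_mul]; abel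
  have hpos : (0 : H →L[ℂ] H) ≤ 1 - Q := by
    rw [ContinuousLinearMap.nonneg_iff_isPositive]
    refine ⟨hsa.isSymmetric, fun x => ?_⟩
    have hx : ((1 : H →L[ℂ] H) - Q) x = (1 - Q) ((1 - Q) x) := by
      conv_lhs => rw [← hPidem]
      rw [ContinuousLinearMap.mul_apply]
    rw [reApplyInnerSelf_apply, hx]
    nth_rewrite 1 [← hsa.adjoint_eq]
    rw [ContinuousLinearMap.adjoint_inner_left]
    exact inner_self_nonneg
  have hdefect : defect T = 1 - Q := by
    unfold defect
    exact CFC.sqrt_unique hPidem hpos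
  have hker : ∀ x ∈ LinearMap.ker (T : H →ₗ[ℂ] H), ((1 : H →L[ℂ] H) - Q) x = x := by
    intro x hx
    have : T x = 0 := hx
    simp [hQdef, sub_apply, mul_apply, this]
  have hrange : defectSpace T = LinearMap.ker (T : H →ₗ[ℂ] H) := by
    have h1 : LinearMap.range (defect T : H →ₗ[ℂ] H) = LinearMap.ker (T : H →ₗ[ℂ] H) := by
      ext x
      constructor
      · rintro ⟨y, rfl⟩
        rw [hdefect]
        show T (((1 : H →L[ℂ] H) - Q) y) = 0
        have : T ∘L ((1 : H →L[ℂ] H) - Q) = 0 := by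
          have : T * ((1 : H →L[ℂ] H) - Q) = 0 := by
            rw [mul_sub, mul_one, hQdef, ← mul_assoc, hpi, sub_self]
          exact this
        calc T (((1 : H →L[ℂ] H) - Q) y) = (T ∘L ((1 : H →L[ℂ] H) - Q)) y := rfl
          _ = 0 := by rw [this]; rfl
      · intro hx
        exact ⟨x, by rw [hdefect]; exact hker x hx⟩
    unfold defectSpace
    rw [h1]
    exact IsClosed.submodule_topologicalClosure_eq (ContinuousLinearMap.isClosed_ker T)
  set e : defectSpace T ≃ₗᵢ[ℂ] LinearMap.ker (T : H →ₗ[ℂ] H) :=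
    LinearIsometryEquiv.ofEq _ _ hrange with he
  have hcoe : ∀ y : defectSpace T, ((e y : LinearMap.ker (T : H →ₗ[ℂ] H)) : H) = (y : H) := fun y => rfl
  have hcoes : ∀ y : LinearMap.ker (T : H →ₗ[ℂ] H), ((e.symm y : defectSpace T) : H) = (y : H) := fun y => rfl
  have hcomp : ∀ x : LinearMap.ker (T : H →ₗ[ℂ] H), defectTo T (x : H) = e.symm x := by
    intro x
    apply Subtype.ext
    rw [hcoes]
    show defect T (x : H) = (x : H)
    rw [hdefect]
    exact hker x x.2
  have key : ∀ (F : defectSpace T →L[ℂ] defectSpace T) (D : LinearMap.ker (T : H →ₗ[ℂ] H) →L[ℂ] LinearMap.ker (T : H →ₗ[ℂ] H))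
      (T' T'' : H →L[ℂ] H),
      (T' - adjoint T'' * T = (defectSpace T).subtypeL ∘L F ∘L defectTo T) →
      (∀ x : LinearMap.ker (T : H →ₗ[ℂ] H), (D x : H) = T' (x : H)) →
      D = (e : defectSpace T →L[ℂ] LinearMap.ker (T : H →ₗ[ℂ] H)) ∘L F ∘L
        (e.symm : LinearMap.ker (T : H →ₗ[ℂ] H) →L[ℂ] defectSpace T) := by
    intro F D T' T'' hF hD
    ext x
    rw [hD]
    have hfx := congrFun (congrArg DFunLike.coe hF) (x : H)
    simp only [sub_apply, ContinuousLinearMap.mul_apply, comp_apply] at hfx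
    have hTx : T (x : H) = 0 := x.2
    rw [hTx, map_zero, sub_zero] at hfx
    rw [hfx]
    show ((F (defectTo T (x : H))) : H) = _
    rw [hcomp x]
    rfl
  have hD1' := key F₁ D₁ T₁ T₂ hF₁ hD₁
  have hD2' := key F₂ D₂ T₂ T₁ hF₂ hD₂
  rw [conj_selfComm e F₁ D₁ hD1', conj_selfComm e F₂ D₂ hD2']
  constructor
  · intro h; rw [h]
  · intro h; rw [conj_inj e _ _ h]
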